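/- (Theorem 2(b), primal infeasibility) Let K ≥ 1, let x̃_1, …, x̃_K ∈ X with ergodic average x̄_K = (1/K)·Σ_{k=1}^{K} x̃_k, let λ_0, …, λ_{K+1} ∈ ℝᵖ, let L > 0, E ≥ 0, and let D ⊆ ℝᵖ. Define φ^k(λ) = (L/2)‖λ_k − λ‖² + (1/2)‖λ_{k−1} − λ*‖². Assume: (i) x* ∈ X satisfies Ax* = b and (x*, λ*) is a saddle point of the Lagrangian L(x;λ) = f(x) + ⟨Ax − b, λ⟩, i.e. L(x*;λ) ≤ L(x*;λ*) ≤ L(x;λ*) for all x ∈ X, λ ∈ ℝᵖ; (ii) r(x̄_K) ≠ 0 and λ* + r(x̄_K)/‖r(x̄_K)‖ ∈ D; (iii) for every k ∈ {1,…,K} and every λ ∈ D: f(x̃_k) − f(x*) + ⟨λ, r(x̃_k)⟩ ≤ φ^k(λ) − φ^{k+1}(λ) + E. Then ‖r(x̄_K)‖ ≤ (1/K)·φ^1(λ* + r(x̄_K)/‖r(x̄_K)‖) + E. -/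

import Mathlib

open RealInnerProductSpace

set_option maxHeartbeats 1000000 in
/-- Theorem 2(b): primal infeasibility bound. -/
theorem primal_infeasibility
    (n p : ℕ)
    (A : EuclideanSpace ℝ (Fin n) →ₗ[ℝ] EuclideanSpace ℝ (Fin p))
    (b : EuclideanSpace ℝ (Fin p))
    (f : EuclideanSpace ℝ (Fin n) → ℝ)
    (hf : ConvexOn ℝ Set.univ f)
    (X : Set (EuclideanSpace ℝ (Fin n)))
    (hXne : X.Nonempty) (hXconvex : Convex ℝ X)
    (K : ℕ) (hK : 1 ≤ K)
    (xt : ℕ → EuclideanSpace ℝ (Fin n))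
    (hxt : ∀ k, 1 ≤ k → k ≤ K → xt k ∈ X)
    (xbar : EuclideanSpace ℝ (Fin n))
    (hxbar : xbar = (K : ℝ)⁻¹ • ∑ k ∈ Finset.Icc 1 K, xt k)
    (lam : ℕ → EuclideanSpace ℝ (Fin p))
    (lamstar : EuclideanSpace ℝ (Fin p))
    (L Econst : ℝ) (hL : 0 < L) (hE : 0 ≤ Econst)
    (D : Set (EuclideanSpace ℝ (Fin p)))
    (φ : ℕ → EuclideanSpace ℝ (Fin p) → ℝ)
    (hφ : ∀ k l,
      φ k l = L / 2 * ‖lam k - l‖ ^ 2 + 1 / 2 * ‖lam (k - 1) - lamstar‖ ^ 2)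
    -- (i) primal feasible optimum and saddle point of the Lagrangian
    (xstar : EuclideanSpace ℝ (Fin n)) (hxstarX : xstar ∈ X)
    (hxstar_feas : A xstar = b)
    (hsaddle_left : ∀ l : EuclideanSpace ℝ (Fin p),
      f xstar + ⟪A xstar - b, l⟫ ≤ f xstar + ⟪A xstar - b, lamstar⟫)
    (hsaddle_right : ∀ x ∈ X,
      f xstar + ⟪A xstar - b, lamstar⟫ ≤ f x + ⟪A x - b, lamstar⟫)
    -- (ii) nonzero residual and membership in `D`
    (hres_ne : A xbar - b ≠ 0)
    (hmemD : lamstar + ‖A xbar - b‖⁻¹ • (A xbar - b) ∈ D)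
    -- (iii) per-iteration inequality
    (hstep : ∀ k, 1 ≤ k → k ≤ K → ∀ l ∈ D,
      f (xt k) - f xstar + ⟪l, A (xt k) - b⟫ ≤ φ k l - φ (k + 1) l + Econst) :
    ‖A xbar - b‖ ≤
      1 / K * φ 1 (lamstar + ‖A xbar - b‖⁻¹ • (A xbar - b)) + Econst := by

  set r := A xbar - b with hr
  set lh := lamstar + ‖A xbar - b‖⁻¹ • (A xbar - b) with hlh
  have hKpos : (0:ℝ) < K := by exact_mod_cast hK
  have hrnorm : (0:ℝ) < ‖r‖ := norm_pos_iff.mpr hres_ne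
  have hcard : (Finset.Icc 1 K).card = K := by
    rw [Nat.card_Icc]; omega
  have hwsum : ∑ _k ∈ Finset.Icc 1 K, (K:ℝ)⁻¹ = 1 := by
    rw [Finset.sum_const, hcard, nsmul_eq_mul, mul_inv_cancel₀ hKpos.ne']
  have hxbar' : xbar = ∑ k ∈ Finset.Icc 1 K, (K:ℝ)⁻¹ • xt k := by
    rw [hxbar, Finset.smul_sum]
  have hxbarX : xbar ∈ X := by
    rw [hxbar']
    exact hXconvex.sum_mem (fun i _ => by positivity) hwsum
      (fun i hi => hxt i (Finset.mem_Icc.mp hi).1 (Finset.mem_Icc.mp hi).2)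
  -- Jensen
  have hjensen : f xbar ≤ ∑ k ∈ Finset.Icc 1 K, (K:ℝ)⁻¹ * f (xt k) := by
    rw [hxbar']
    exact hf.map_sum_le (fun i _ => by positivity) hwsum (fun i _ => Set.mem_univ _)
  -- residual sum
  have hressum : ∑ k ∈ Finset.Icc 1 K, (A (xt k) - b) = (K:ℝ) • r := by
    have : A xbar = (K:ℝ)⁻¹ • ∑ k ∈ Finset.Icc 1 K, A (xt k) := by
      rw [hxbar, map_smul, map_sum]
    rw [Finset.sum_sub_distrib, Finset.sum_const, hcard, hr, smul_sub, this,
      smul_smul, mul_inv_cancel₀ hKpos.ne', one_smul]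
    congr 1
    · exact (Nat.cast_smul_eq_nsmul ℝ K b).symm
  -- sum of per-iteration inequalities
  have hsum : ∑ k ∈ Finset.Icc 1 K, (f (xt k) - f xstar + ⟪lh, A (xt k) - b⟫)
      ≤ ∑ k ∈ Finset.Icc 1 K, (φ k lh - φ (k + 1) lh) + K * Econst := by
    have : ∑ _k ∈ Finset.Icc 1 K, Econst = K * Econst := by
      rw [Finset.sum_const, hcard, nsmul_eq_mul]
    rw [← this, ← Finset.sum_add_distrib]
    exact Finset.sum_le_sum fun k hk =>
      hstep k (Finset.mem_Icc.mp hk).1 (Finset.mem_Icc.mp hk).2 lh hmemD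
  -- telescoping
  have htel : ∑ k ∈ Finset.Icc 1 K, (φ k lh - φ (k + 1) lh) = φ 1 lh - φ (K + 1) lh := by
    have h1 : ∑ k ∈ Finset.Icc 1 K, (φ k lh - φ (k + 1) lh)
        = ∑ i ∈ Finset.range K, (φ (i + 1) lh - φ (i + 1 + 1) lh) := by
      rw [← Finset.Ico_add_one_right_eq_Icc, Finset.sum_Ico_eq_sum_range]
      simp [add_comm]
    rw [h1, Finset.sum_range_sub' (fun i => φ (i + 1) lh)]
  have hφnonneg : 0 ≤ φ (K + 1) lh := by
    rw [hφ]; positivity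
  -- lower bound the LHS sum
  have hlhs : (K:ℝ) * (f xbar - f xstar + ⟪lh, r⟫)
      ≤ ∑ k ∈ Finset.Icc 1 K, (f (xt k) - f xstar + ⟪lh, A (xt k) - b⟫) := by
    have hsplit : ∑ k ∈ Finset.Icc 1 K, (f (xt k) - f xstar + ⟪lh, A (xt k) - b⟫)
        = (∑ k ∈ Finset.Icc 1 K, f (xt k)) - K * f xstar + ⟪lh, (K:ℝ) • r⟫ := by
      rw [← hressum, inner_sum, Finset.sum_add_distrib, Finset.sum_sub_distrib,
        Finset.sum_const, hcard, nsmul_eq_mul]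
    rw [hsplit, real_inner_smul_right]
    have hfsum : (K:ℝ) * f xbar ≤ ∑ k ∈ Finset.Icc 1 K, f (xt k) := by
      calc (K:ℝ) * f xbar ≤ (K:ℝ) * ∑ k ∈ Finset.Icc 1 K, (K:ℝ)⁻¹ * f (xt k) := by
            exact mul_le_mul_of_nonneg_left hjensen hKpos.le
        _ = ∑ k ∈ Finset.Icc 1 K, f (xt k) := by
            rw [← Finset.mul_sum, ← mul_assoc, mul_inv_cancel₀ hKpos.ne', one_mul]
    nlinarith [hfsum]
  -- inner product with lh
  have hinner : ⟪lh, r⟫ = ⟪lamstar, r⟫ + ‖r‖ := by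
    rw [hlh, ← hr, inner_add_left, real_inner_smul_left, real_inner_self_eq_norm_sq]
    field_simp
  -- saddle point
  have hsad : 0 ≤ f xbar - f xstar + ⟪lamstar, r⟫ := by
    have := hsaddle_right xbar hxbarX
    rw [hxstar_feas, sub_self] at this
    simp only [inner_zero_left, add_zero] at this
    rw [real_inner_comm]
    linarith
  have hmain : (K:ℝ) * ‖r‖ ≤ φ 1 lh + K * Econst := by
    have := hsum
    rw [htel] at this
    have h2 := le_trans hlhs this
    rw [hinner] at h2
    nlinarith
  have h3 : 0 ≤ (1/(K:ℝ)) * (φ 1 lh + K * Econst - K * ‖r‖) :=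
    mul_nonneg (by positivity) (by linarith)
  have hKinv : (1/(K:ℝ)) * K = 1 := by field_simp
  nlinarith [h3, hKinv]
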